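/- Fix 0 < β_P < β_U, α ∈ (0,1), 0 < γ < α β_P, L > 0, 0 < C_P < C_U, and z_Ī ∈ [0,1]. With y(μ_S) := y_EE(1, z_Ī; μ_S), h(μ_S) := (1−α)L(β_P + (β_U−β_P)z_Ī)y(μ_S) − C_P, and g(μ_S) := y(μ_S)(C_U − C_P) − (1−μ_S)(1−y(μ_S))(−h(μ_S)): on any interval of μ_S ∈ [0,1] where h(μ_S) < 0, the function g is monotonically increasing in μ_S. -/
import Mathlib


noncomputable def yEE7 (βP βU α γ zI μS : ℝ) : ℝ :=
  1 - γ / ((βP + (βU - βP) * zI) * (α + (1 - α) * (μS + zI * (1 - μS))))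

noncomputable def h7 (βP βU α γ L CP zI μS : ℝ) : ℝ :=
  (1 - α) * L * (βP + (βU - βP) * zI) * yEE7 βP βU α γ zI μS - CP

noncomputable def g7 (βP βU α γ L CP CU zI μS : ℝ) : ℝ :=
  yEE7 βP βU α γ zI μS * (CU - CP)
    - (1 - μS) * (1 - yEE7 βP βU α γ zI μS) * (-(h7 βP βU α γ L CP zI μS))

lemma key7 (CU CP c μ μ' q q' : ℝ) (hμ : μ < μ') (hμ1 : μ' ≤ 1)
    (hq0' : 0 < q') (hqq : q' ≤ q) (hc : 0 ≤ c)
    (hh : 0 < CP - c * (1 - q)) (hh' : 0 < CP - c * (1 - q')) (hCPU : CP < CU) :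
    (1 - q) * (CU - CP) - (1 - μ) * q * (CP - c * (1 - q)) <
      (1 - q') * (CU - CP) - (1 - μ') * q' * (CP - c * (1 - q')) := by
  have hq0 : 0 < q := lt_of_lt_of_le hq0' hqq
  have e1 : CP - c * (1 - q') ≤ CP - c * (1 - q) := by nlinarith
  have e2 : (1 - μ') * (q' * (CP - c * (1 - q'))) ≤ (1 - μ') * (q * (CP - c * (1 - q))) := by
    apply mul_le_mul_of_nonneg_left _ (by linarith)
    exact mul_le_mul hqq e1 hh'.le hq0.le
  have e3 : (1 - μ') * (q * (CP - c * (1 - q))) < (1 - μ) * (q * (CP - c * (1 - q))) :=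
    mul_lt_mul_of_pos_right (by linarith) (mul_pos hq0 hh)
  have e4 : 0 ≤ (q - q') * (CU - CP) := mul_nonneg (by linarith) (by linarith)
  nlinarith [e2, e3, e4]

set_option maxHeartbeats 1000000 in
theorem stmt_7 (βP βU α γ L CP CU zI : ℝ) (hβP : 0 < βP) (hββ : βP < βU)
    (hα : α ∈ Set.Ioo (0:ℝ) 1) (hγ0 : 0 < γ) (hγ : γ < α * βP)
    (hL : 0 < L) (hCP : 0 < CP) (hCPU : CP < CU) (hzI : zI ∈ Set.Icc (0:ℝ) 1) :
    ∀ μS μS' : ℝ, μS ∈ Set.Icc (0:ℝ) 1 → μS' ∈ Set.Icc (0:ℝ) 1 → μS < μS' →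
      h7 βP βU α γ L CP zI μS < 0 → h7 βP βU α γ L CP zI μS' < 0 →
      g7 βP βU α γ L CP CU zI μS < g7 βP βU α γ L CP CU zI μS' := by
  obtain ⟨hα0, hα1⟩ := hα
  obtain ⟨hz0, hz1⟩ := hzI
  intro μS μS' hμ hμ' hlt hh hh'
  obtain ⟨hμ0, hμ1⟩ := hμ
  obtain ⟨hμ0', hμ1'⟩ := hμ'
  have hβ : 0 < βP + (βU - βP) * zI := by nlinarith
  have hm : 0 ≤ μS + zI * (1 - μS) := by
    nlinarith [mul_nonneg hz0 (by linarith : (0:ℝ) ≤ 1 - μS)]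
  have hm' : 0 ≤ μS' + zI * (1 - μS') := by
    nlinarith [mul_nonneg hz0 (by linarith : (0:ℝ) ≤ 1 - μS')]
  have hD : α ≤ α + (1 - α) * (μS + zI * (1 - μS)) := by
    nlinarith [mul_nonneg (by linarith : (0:ℝ) ≤ 1 - α) hm]
  have hD' : α ≤ α + (1 - α) * (μS' + zI * (1 - μS')) := by
    nlinarith [mul_nonneg (by linarith : (0:ℝ) ≤ 1 - α) hm']
  have hDα : (0:ℝ) < α + (1 - α) * (μS + zI * (1 - μS)) := lt_of_lt_of_le hα0 hD
  have hDα' : (0:ℝ) < α + (1 - α) * (μS' + zI * (1 - μS')) := lt_of_lt_of_le hα0 hD'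
  set A := (βP + (βU - βP) * zI) * (α + (1 - α) * (μS + zI * (1 - μS))) with hAdef
  set A' := (βP + (βU - βP) * zI) * (α + (1 - α) * (μS' + zI * (1 - μS'))) with hA'def
  have hA : 0 < A := mul_pos hβ hDα
  have hA' : 0 < A' := mul_pos hβ hDα'
  have hAA : A ≤ A' := by
    rw [hAdef, hA'def]
    apply mul_le_mul_of_nonneg_left _ hβ.le
    nlinarith [mul_nonneg (by linarith : (0:ℝ) ≤ 1 - zI) (by linarith : (0:ℝ) ≤ μS' - μS),
      mul_nonneg (by linarith : (0:ℝ) ≤ 1 - α) (mul_nonneg (by linarith : (0:ℝ) ≤ 1 - zI) (by linarith : (0:ℝ) ≤ μS' - μS))]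
  have hβPle : βP ≤ βP + (βU - βP) * zI := by
    nlinarith [mul_nonneg (by linarith : (0:ℝ) ≤ βU - βP) hz0]
  have hγA : γ < A := by
    have h1 : βP * α ≤ (βP + (βU - βP) * zI) * (α + (1 - α) * (μS + zI * (1 - μS))) :=
      mul_le_mul hβPle hD hα0.le hβ.le
    rw [hAdef]
    linarith
  set q := γ / A with hqdef
  set q' := γ / A' with hq'def
  set c := (1 - α) * L * (βP + (βU - βP) * zI) with hcdef
  have hc : 0 ≤ c := by
    rw [hcdef]
    exact mul_nonneg (mul_nonneg (by linarith) hL.le) hβ.le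
  have hq0' : 0 < q' := div_pos hγ0 hA'
  have hqq : q' ≤ q := by
    rw [hqdef, hq'def]
    exact div_le_div_of_nonneg_left hγ0.le hA hAA
  have hyS : yEE7 βP βU α γ zI μS = 1 - q := by
    simp only [yEE7, hqdef, hAdef]
  have hyS' : yEE7 βP βU α γ zI μS' = 1 - q' := by
    simp only [yEE7, hq'def, hA'def]
  have hhS : h7 βP βU α γ L CP zI μS = c * (1 - q) - CP := by
    simp only [h7, hyS, hcdef]
  have hhS' : h7 βP βU α γ L CP zI μS' = c * (1 - q') - CP := by
    simp only [h7, hyS', hcdef]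
  rw [hhS] at hh
  rw [hhS'] at hh'
  have hgS : g7 βP βU α γ L CP CU zI μS
      = (1 - q) * (CU - CP) - (1 - μS) * q * (CP - c * (1 - q)) := by
    simp only [g7, hyS, hhS]; ring
  have hgS' : g7 βP βU α γ L CP CU zI μS'
      = (1 - q') * (CU - CP) - (1 - μS') * q' * (CP - c * (1 - q')) := by
    simp only [g7, hyS', hhS']; ring
  rw [hgS, hgS']
  exact key7 CU CP c μS μS' q q' hlt hμ1' hq0' hqq hc (by linarith) (by linarith) hCPU
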